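/- Let 0 < ε ≤ 1 and let c : (0,∞) → [0,∞) be measurable with ∫₀^∞ (1+x) c(x) dx ≤ M < ∞. Then [ε ∫₀^∞ x^{−2/3}(1+x/ε)^{1/3} c(x) dx]² ≤ 2^{4/3} M · ε ∫₀^∞ x^{−4/3}(1+x/ε)^{1/3} c(x) dx. -/

import Mathlib

open MeasureTheory Set

theorem stmt_3 (ε M : ℝ) (hε : 0 < ε) (hε1 : ε ≤ 1) (c : ℝ → ℝ)
    (hnn : ∀ x ∈ Ioi (0:ℝ), 0 ≤ c x)
    (h1 : IntegrableOn (fun x => (1+x) * c x) (Ioi 0))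
    (h2 : IntegrableOn (fun x => x ^ (-(2:ℝ)/3) * (1+x/ε) ^ ((1:ℝ)/3) * c x) (Ioi 0))
    (h4 : IntegrableOn (fun x => x ^ (-(4:ℝ)/3) * (1+x/ε) ^ ((1:ℝ)/3) * c x) (Ioi 0))
    (hM : ∫ x in Ioi (0:ℝ), (1+x) * c x ≤ M) :
    (ε * ∫ x in Ioi (0:ℝ), x ^ (-(2:ℝ)/3) * (1+x/ε) ^ ((1:ℝ)/3) * c x) ^ 2
      ≤ 2 ^ ((4:ℝ)/3) * M *
        (ε * ∫ x in Ioi (0:ℝ), x ^ (-(4:ℝ)/3) * (1+x/ε) ^ ((1:ℝ)/3) * c x) := by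
  set μ := volume.restrict (Ioi (0:ℝ)) with hμ
  set F : ℝ → ℝ := fun x => x ^ (-(4:ℝ)/3) * (1+x/ε) ^ ((1:ℝ)/3) * c x with hF
  set H : ℝ → ℝ := fun x => x ^ (-(2:ℝ)/3) * (1+x/ε) ^ ((1:ℝ)/3) * c x with hH
  set G : ℝ → ℝ := fun x => (1+x/ε) ^ ((1:ℝ)/3) * c x with hG
  have hae : ∀ᵐ x ∂μ, x ∈ Ioi (0:ℝ) := ae_restrict_mem measurableSet_Ioi
  -- basic positivity facts on Ioi 0
  have hbase : ∀ x ∈ Ioi (0:ℝ), 0 < 1 + x/ε := fun x hx => by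
    have : 0 < x/ε := div_pos hx hε
    linarith
  have hGnn : ∀ x ∈ Ioi (0:ℝ), 0 ≤ G x := fun x hx =>
    mul_nonneg (Real.rpow_nonneg (hbase x hx).le _) (hnn x hx)
  have hFnn : ∀ x ∈ Ioi (0:ℝ), 0 ≤ F x := fun x hx =>
    mul_nonneg (mul_nonneg (Real.rpow_nonneg (le_of_lt hx) _)
      (Real.rpow_nonneg (hbase x hx).le _)) (hnn x hx)
  have hHnn : ∀ x ∈ Ioi (0:ℝ), 0 ≤ H x := fun x hx =>
    mul_nonneg (mul_nonneg (Real.rpow_nonneg (le_of_lt hx) _)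
      (Real.rpow_nonneg (hbase x hx).le _)) (hnn x hx)
  -- key pointwise bound
  have key : ∀ x ∈ Ioi (0:ℝ), (1+x/ε) ^ ((1:ℝ)/3) ≤ ε⁻¹ ^ ((1:ℝ)/3) * (1+x) := by
    intro x hx
    have hx0 : (0:ℝ) < x := hx
    have h1' : (1:ℝ) + x/ε ≤ (1+x)/ε := by
      rw [le_div_iff₀ hε]
      have he : (1 + x/ε) * ε = ε + x := by field_simp
      rw [he]; linarith
    calc (1+x/ε) ^ ((1:ℝ)/3) ≤ ((1+x)/ε) ^ ((1:ℝ)/3) :=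
          Real.rpow_le_rpow (hbase x hx).le h1' (by norm_num)
      _ = (1+x) ^ ((1:ℝ)/3) * ε⁻¹ ^ ((1:ℝ)/3) := by
          rw [div_eq_mul_inv, Real.mul_rpow (by positivity) (by positivity)]
      _ ≤ (1+x) * ε⁻¹ ^ ((1:ℝ)/3) := by
          have h13 : (1+x) ^ ((1:ℝ)/3) ≤ (1+x) ^ (1:ℝ) :=
            Real.rpow_le_rpow_of_exponent_le (by linarith) (by norm_num)
          rw [Real.rpow_one] at h13
          exact mul_le_mul_of_nonneg_right h13 (by positivity)
      _ = ε⁻¹ ^ ((1:ℝ)/3) * (1+x) := by ring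
  -- measurability of c on μ
  have hc : AEStronglyMeasurable c μ := by
    have h1m : AEStronglyMeasurable (fun x => (1+x) * c x) μ := h1.aestronglyMeasurable
    have hcont : AEStronglyMeasurable (fun x : ℝ => (1+x)⁻¹) μ :=
      (measurable_const.add measurable_id).inv.aestronglyMeasurable
    have hmul : AEStronglyMeasurable (fun x => (1+x)⁻¹ * ((1+x) * c x)) μ := hcont.mul h1m
    refine hmul.congr ?_
    filter_upwards [hae] with x hx
    have hne : (1:ℝ) + x ≠ 0 := by have : (0:ℝ) < x := hx; positivity
    field_simp
  have hGm : AEStronglyMeasurable G μ := by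
    have : Continuous (fun x : ℝ => (1+x/ε) ^ ((1:ℝ)/3)) :=
      (Real.continuous_rpow_const (by norm_num)).comp
        (continuous_const.add (continuous_id.div_const ε))
    exact this.aestronglyMeasurable.mul hc
  -- G is integrable : dominated by ε⁻¹^(1/3) * (1+x) * c x
  have hGint : Integrable G μ := by
    refine Integrable.mono' ((h1.const_mul (ε⁻¹ ^ ((1:ℝ)/3))) : Integrable
      (fun x => ε⁻¹ ^ ((1:ℝ)/3) * ((1+x) * c x)) μ) hGm ?_
    filter_upwards [hae] with x hx
    rw [Real.norm_of_nonneg (hGnn x hx)]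
    calc G x = (1+x/ε) ^ ((1:ℝ)/3) * c x := rfl
      _ ≤ (ε⁻¹ ^ ((1:ℝ)/3) * (1+x)) * c x :=
          mul_le_mul_of_nonneg_right (key x hx) (hnn x hx)
      _ = ε⁻¹ ^ ((1:ℝ)/3) * ((1+x) * c x) := by ring
  -- Cauchy–Schwarz setup
  have hf : AEStronglyMeasurable (fun x => Real.sqrt (F x)) μ :=
    Real.continuous_sqrt.comp_aestronglyMeasurable h4.aestronglyMeasurable
  have hg : AEStronglyMeasurable (fun x => Real.sqrt (G x)) μ :=
    Real.continuous_sqrt.comp_aestronglyMeasurable hGm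
  have hf2 : ∀ᵐ x ∂μ, Real.sqrt (F x) ^ 2 = F x := by
    filter_upwards [hae] with x hx; exact Real.sq_sqrt (hFnn x hx)
  have hg2 : ∀ᵐ x ∂μ, Real.sqrt (G x) ^ 2 = G x := by
    filter_upwards [hae] with x hx; exact Real.sq_sqrt (hGnn x hx)
  have hfLp : MemLp (fun x => Real.sqrt (F x)) (ENNReal.ofReal 2) μ := by
    rw [show ENNReal.ofReal 2 = 2 by norm_num, memLp_two_iff_integrable_sq hf]
    exact h4.congr (hf2.mono fun x hx => hx.symm)
  have hgLp : MemLp (fun x => Real.sqrt (G x)) (ENNReal.ofReal 2) μ := by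
    rw [show ENNReal.ofReal 2 = 2 by norm_num, memLp_two_iff_integrable_sq hg]
    exact hGint.congr (hg2.mono fun x hx => hx.symm)
  have hconj : Real.HolderConjugate 2 2 := Real.HolderConjugate.two_two
  have hCS := integral_mul_le_Lp_mul_Lq_of_nonneg hconj (μ := μ)
    (Filter.Eventually.of_forall fun x => Real.sqrt_nonneg _)
    (Filter.Eventually.of_forall fun x => Real.sqrt_nonneg _) hfLp hgLp
  -- rewrite the integrals in hCS
  have hprod : ∫ x, Real.sqrt (F x) * Real.sqrt (G x) ∂μ = ∫ x, H x ∂μ := by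
    refine integral_congr_ae ?_
    filter_upwards [hae] with x hx
    have hx0 : (0:ℝ) < x := hx
    have e1 : x ^ (-(2:ℝ)/3) * x ^ (-(2:ℝ)/3) = x ^ (-(4:ℝ)/3) := by
      rw [← Real.rpow_add hx0]; norm_num
    have hFG : F x * G x = H x ^ 2 := by
      simp only [hF, hG, hH]
      rw [← e1]; ring
    rw [← Real.sqrt_mul (hFnn x hx), hFG, Real.sqrt_sq (hHnn x hx)]
  have hIF : ∫ x, Real.sqrt (F x) ^ (2:ℝ) ∂μ = ∫ x, F x ∂μ :=
    integral_congr_ae (hf2.mono fun x h => by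
      show Real.sqrt (F x) ^ (2:ℝ) = F x
      rw [Real.rpow_two]; exact h)
  have hIG : ∫ x, Real.sqrt (G x) ^ (2:ℝ) ∂μ = ∫ x, G x ∂μ :=
    integral_congr_ae (hg2.mono fun x h => by
      show Real.sqrt (G x) ^ (2:ℝ) = G x
      rw [Real.rpow_two]; exact h)
  rw [hprod, hIF, hIG] at hCS
  set S := ∫ x, H x ∂μ with hS
  set A := ∫ x, F x ∂μ with hA
  set B := ∫ x, G x ∂μ with hB
  have hAnn : 0 ≤ A := integral_nonneg_of_ae (by filter_upwards [hae] with x hx; exact hFnn x hx)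
  have hBnn : 0 ≤ B := integral_nonneg_of_ae (by filter_upwards [hae] with x hx; exact hGnn x hx)
  have hSnn : 0 ≤ S := integral_nonneg_of_ae (by filter_upwards [hae] with x hx; exact hHnn x hx)
  -- from hCS : S ≤ A^(1/2) * B^(1/2) deduce S^2 ≤ A*B
  have hS2 : S ^ 2 ≤ A * B := by
    have hsq := mul_self_le_mul_self hSnn hCS
    have eA : A ^ ((1:ℝ)/2) * B ^ ((1:ℝ)/2) * (A ^ ((1:ℝ)/2) * B ^ ((1:ℝ)/2)) = A * B := by
      have e1 : A ^ ((1:ℝ)/2) * A ^ ((1:ℝ)/2) = A := by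
        rw [← Real.rpow_add' hAnn (by norm_num)]; norm_num
      have e2 : B ^ ((1:ℝ)/2) * B ^ ((1:ℝ)/2) = B := by
        rw [← Real.rpow_add' hBnn (by norm_num)]; norm_num
      calc A ^ ((1:ℝ)/2) * B ^ ((1:ℝ)/2) * (A ^ ((1:ℝ)/2) * B ^ ((1:ℝ)/2))
          = (A ^ ((1:ℝ)/2) * A ^ ((1:ℝ)/2)) * (B ^ ((1:ℝ)/2) * B ^ ((1:ℝ)/2)) := by ring
        _ = A * B := by rw [e1, e2]
    calc S ^ 2 = S * S := sq S
      _ ≤ A ^ ((1:ℝ)/2) * B ^ ((1:ℝ)/2) * (A ^ ((1:ℝ)/2) * B ^ ((1:ℝ)/2)) := hsq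
      _ = A * B := eA
  -- ε * B ≤ M
  have hεinv : ε * ε⁻¹ ^ ((1:ℝ)/3) ≤ 1 := by
    have h13 : (0:ℝ) < ε ^ ((1:ℝ)/3) := Real.rpow_pos_of_pos hε _
    have heq : ε ^ ((2:ℝ)/3) * ε ^ ((1:ℝ)/3) = ε := by
      rw [← Real.rpow_add hε]; norm_num
    have hval : ε * ε⁻¹ ^ ((1:ℝ)/3) = ε ^ ((2:ℝ)/3) := by
      rw [Real.inv_rpow hε.le]
      field_simp
      linarith [heq]
    rw [hval]
    calc ε ^ ((2:ℝ)/3) ≤ 1 ^ ((2:ℝ)/3) :=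
          Real.rpow_le_rpow hε.le hε1 (by norm_num)
      _ = 1 := Real.one_rpow _
  have hεB : ε * B ≤ ∫ x, (1+x) * c x ∂μ := by
    rw [hB, ← integral_const_mul]
    refine integral_mono_ae (hGint.const_mul ε) h1 ?_
    filter_upwards [hae] with x hx
    have hx0 : (0:ℝ) < x := hx
    calc ε * G x = ε * ((1+x/ε) ^ ((1:ℝ)/3) * c x) := rfl
      _ ≤ ε * ((ε⁻¹ ^ ((1:ℝ)/3) * (1+x)) * c x) :=
          mul_le_mul_of_nonneg_left
            (mul_le_mul_of_nonneg_right (key x hx) (hnn x hx)) hε.le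
      _ = (ε * ε⁻¹ ^ ((1:ℝ)/3)) * ((1+x) * c x) := by ring
      _ ≤ 1 * ((1+x) * c x) :=
          mul_le_mul_of_nonneg_right hεinv (mul_nonneg (by linarith) (hnn x hx))
      _ = (1+x) * c x := one_mul _
  have hM0 : 0 ≤ ∫ x, (1+x) * c x ∂μ := integral_nonneg_of_ae (by
    filter_upwards [hae] with x hx
    exact mul_nonneg (by have : (0:ℝ) < x := hx; linarith) (hnn x hx))
  have hMnn : 0 ≤ M := hM0.trans hM
  have h2c : (1:ℝ) ≤ 2 ^ ((4:ℝ)/3) := by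
    calc (1:ℝ) = 2 ^ (0:ℝ) := (Real.rpow_zero 2).symm
      _ ≤ 2 ^ ((4:ℝ)/3) := Real.rpow_le_rpow_of_exponent_le one_le_two (by norm_num)
  have hεA : 0 ≤ ε * A := mul_nonneg hε.le hAnn
  have hεBM : ε * B ≤ M := hεB.trans hM
  calc (ε * S) ^ 2 = ε ^ 2 * S ^ 2 := by ring
    _ ≤ ε ^ 2 * (A * B) := mul_le_mul_of_nonneg_left hS2 (sq_nonneg ε)
    _ = (ε * A) * (ε * B) := by ring
    _ ≤ (ε * A) * M := mul_le_mul_of_nonneg_left hεBM hεA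
    _ = 1 * (M * (ε * A)) := by ring
    _ ≤ 2 ^ ((4:ℝ)/3) * (M * (ε * A)) :=
        mul_le_mul_of_nonneg_right h2c (mul_nonneg hMnn hεA)
    _ = 2 ^ ((4:ℝ)/3) * M * (ε * A) := by ring
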